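/- Let G be a finite simple graph with m edges and let H be the graph obtained from G as follows: for every edge {u,v} of G add two new vertices, each adjacent exactly to u and v; and add one further new vertex x adjacent to all original vertices of G. Then α'(H) = 2m + α(G), where α(G) is the independence number of G. -/

import Mathlib

namespace ECG

/-- The edge-clique graph `K_e(G)`: its vertices are the edges of `G`, and two distinct
edges are adjacent exactly when all their endpoints are pairwise adjacent in `G`
(i.e. the two edges lie in a common clique of `G`). -/
def edgeCliqueGraph {V : Type*} (G : SimpleGraph V) : SimpleGraph G.edgeSet where
  Adj e f := e ≠ f ∧ G.IsClique {v | v ∈ (e : Sym2 V) ∨ v ∈ (f : Sym2 V)}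
  symm := by
    constructor
    rintro e f ⟨hne, hcl⟩
    refine ⟨hne.symm, ?_⟩
    have h : {v | v ∈ (f : Sym2 V) ∨ v ∈ (e : Sym2 V)} =
        {v | v ∈ (e : Sym2 V) ∨ v ∈ (f : Sym2 V)} := by
      ext v; exact or_comm
    rw [h]; exact hcl
  loopless := ⟨fun e h => h.1 rfl⟩

/-- A set of vertices is independent when no two of its members are adjacent. -/
def IsIndepSet {V : Type*} (G : SimpleGraph V) (S : Set V) : Prop :=
  S.Pairwise fun a b => ¬ G.Adj a b

/-- The independence number `α(G)`: the maximum cardinality of an independent set. -/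
noncomputable def indepNum {V : Type*} (G : SimpleGraph V) : ℕ :=
  sSup {n | ∃ S : Finset V, IsIndepSet G ↑S ∧ S.card = n}

end ECG

namespace ECG

/-- The graph `H` obtained from `G` by adding, for every edge of `G`, two new
simplicial vertices adjacent exactly to the two endpoints of that edge, together with
one further vertex (modelled by `Unit`) adjacent to all original vertices of `G`. -/
def extGraph {V : Type*} (G : SimpleGraph V) :
    SimpleGraph (V ⊕ (G.edgeSet × Fin 2) ⊕ Unit) where
  Adj a b := match a, b with
    | .inl u, .inl v => G.Adj u v
    | .inl u, .inr (.inl p) => u ∈ (p.1 : Sym2 V)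
    | .inr (.inl p), .inl u => u ∈ (p.1 : Sym2 V)
    | .inl _, .inr (.inr _) => True
    | .inr (.inr _), .inl _ => True
    | _, _ => False
  symm := by
    constructor
    rintro (u | p | u) (v | q | v) h <;> first | exact h.symm | exact h
  loopless := by
    constructor
    rintro (u | p | u) h <;> first | exact G.irrefl h | exact h

end ECG

namespace ECG

/- ### general lemmas about indepNum -/

lemma indep_nonempty {V : Type*} (G : SimpleGraph V) :
    {n | ∃ S : Finset V, IsIndepSet G ↑S ∧ S.card = n}.Nonempty :=
  ⟨0, ∅, by simp [IsIndepSet], rfl⟩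

lemma indep_bddAbove {V : Type*} [Finite V] (G : SimpleGraph V) :
    BddAbove {n | ∃ S : Finset V, IsIndepSet G ↑S ∧ S.card = n} := by
  have : Fintype V := Fintype.ofFinite V
  exact ⟨Fintype.card V, by rintro n ⟨S, _, rfl⟩; exact S.card_le_univ⟩

lemma le_indepNum {V : Type*} [Finite V] (G : SimpleGraph V) (S : Finset V)
    (h : IsIndepSet G ↑S) : S.card ≤ indepNum G :=
  le_csSup (indep_bddAbove G) ⟨S, h, rfl⟩

lemma indepNum_le {V : Type*} (G : SimpleGraph V) (n : ℕ)
    (h : ∀ S : Finset V, IsIndepSet G ↑S → S.card ≤ n) : indepNum G ≤ n :=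
  csSup_le (indep_nonempty G) (by rintro m ⟨S, hS, rfl⟩; exact h S hS)

lemma exists_indep_card {V : Type*} [Finite V] (G : SimpleGraph V) :
    ∃ S : Finset V, IsIndepSet G ↑S ∧ S.card = indepNum G :=
  Nat.sSup_mem (indep_nonempty G) (indep_bddAbove G)

/- ### helpers for edgeCliqueGraph -/

section Helpers

variable {α : Type*} {H : SimpleGraph α}

lemma adj_of_mem_edge {e : H.edgeSet} {x y : α} (hx : x ∈ (e : Sym2 α))
    (hy : y ∈ (e : Sym2 α)) (hxy : x ≠ y) : H.Adj x y := by
  have h : (e : Sym2 α) = s(x, y) := (Sym2.mem_and_mem_iff hxy).mp ⟨hx, hy⟩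
  exact H.mem_edgeSet.mp (h ▸ e.2)

lemma cliqueAdj {t₁ t₂ : H.edgeSet} (hne : t₁ ≠ t₂)
    (h : ∀ x ∈ (t₁ : Sym2 α), ∀ y ∈ (t₂ : Sym2 α), x ≠ y → H.Adj x y) :
    (edgeCliqueGraph H).Adj t₁ t₂ := by
  refine ⟨hne, ?_⟩
  intro x hx y hy hxy
  rcases hx with hx | hx <;> rcases hy with hy | hy
  · exact adj_of_mem_edge hx hy hxy
  · exact h x hx y hy hxy
  · exact (h y hy x hx hxy.symm).symm
  · exact adj_of_mem_edge hx hy hxy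

lemma not_cliqueAdj {t₁ t₂ : H.edgeSet} {x y : α}
    (hx : x ∈ (t₁ : Sym2 α)) (hy : y ∈ (t₂ : Sym2 α)) (hxy : x ≠ y)
    (hnadj : ¬ H.Adj x y) : ¬ (edgeCliqueGraph H).Adj t₁ t₂ := by
  rintro ⟨-, hcl⟩
  exact hnadj (hcl (Or.inl hx) (Or.inr hy) hxy)

end Helpers

/- ### the extension graph -/

section Ext

variable {V : Type*} {G : SimpleGraph V}

/-- the universal new vertex -/
def xv (G : SimpleGraph V) : V ⊕ (G.edgeSet × Fin 2) ⊕ Unit := Sum.inr (Sum.inr ())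

/-- the edge of `extGraph G` joining `v` to the universal vertex -/
def xedge (v : V) : (extGraph G).edgeSet :=
  ⟨s(Sum.inl v, xv G), trivial⟩

/-- a pendant edge of `extGraph G` attached to the pendant vertex `p` -/
noncomputable def pend (p : G.edgeSet × Fin 2) : (extGraph G).edgeSet :=
  ⟨s(Sum.inl (Quot.out (p.1 : Sym2 V)).1, Sum.inr (Sum.inl p)), Sym2.out_fst_mem _⟩

lemma xedge_inj : Function.Injective (xedge (G := G)) := by
  intro v w h
  have h' := Subtype.ext_iff.mp h
  simp only [xedge, Sym2.eq_iff, xv] at h'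
  rcases h' with ⟨h1, -⟩ | ⟨h1, -⟩
  · exact Sum.inl.inj h1
  · exact absurd h1 (by simp)

lemma pend_inj : Function.Injective (pend (G := G)) := by
  intro p q h
  have h' := Subtype.ext_iff.mp h
  simp only [pend, Sym2.eq_iff] at h'
  rcases h' with ⟨-, h2⟩ | ⟨h1, -⟩
  · exact Sum.inl.inj (Sum.inr.inj h2)
  · exact absurd h1 (by simp)

lemma edge_cases (t : (extGraph G).edgeSet) :
    (∃ u v, G.Adj u v ∧ (t : Sym2 (V ⊕ (G.edgeSet × Fin 2) ⊕ Unit)) = s(Sum.inl u, Sum.inl v)) ∨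
    (∃ (u : V) (p : G.edgeSet × Fin 2), u ∈ (p.1 : Sym2 V) ∧
      (t : Sym2 (V ⊕ (G.edgeSet × Fin 2) ⊕ Unit)) = s(Sum.inl u, Sum.inr (Sum.inl p))) ∨
    (∃ u : V, (t : Sym2 (V ⊕ (G.edgeSet × Fin 2) ⊕ Unit)) = s(Sum.inl u, xv G)) := by
  obtain ⟨e, he⟩ := t
  revert he
  induction e using Sym2.ind with
  | _ a b =>
    intro he
    have had : (extGraph G).Adj a b := he
    rcases a with u | p | u <;> rcases b with v | q | v
    · exact Or.inl ⟨u, v, had, rfl⟩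
    · exact Or.inr (Or.inl ⟨u, q, had, rfl⟩)
    · cases v; exact Or.inr (Or.inr ⟨u, rfl⟩)
    · exact Or.inr (Or.inl ⟨v, p, had, Sym2.eq_swap⟩)
    · exact False.elim had
    · exact False.elim had
    · cases u; exact Or.inr (Or.inr ⟨v, Sym2.eq_swap⟩)
    · exact False.elim had
    · exact False.elim had

/-- classifies an edge of `extGraph G`: a pendant edge at pendant vertex `(e,i)` is sent to
`some (e, i)`, an original edge `e` of `G` to `some (e, 0)`, an edge at the universal vertex
to `none`. -/
def abClass (G : SimpleGraph V) : Sym2 (V ⊕ (G.edgeSet × Fin 2) ⊕ Unit) → Option (Sym2 V × Fin 2) :=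
  Sym2.lift ⟨fun a b => match a, b with
    | .inl u, .inl v => some (s(u, v), 0)
    | .inl _, .inr (.inl p) => some ((p.1 : Sym2 V), p.2)
    | .inr (.inl p), .inl _ => some ((p.1 : Sym2 V), p.2)
    | _, _ => none,
  by
    intro a b
    rcases a with u | p | u <;> rcases b with v | q | v <;>
      first | rfl | (simp [Sym2.eq_swap])⟩

@[simp] lemma abClass_inl_inl (u v : V) :
    abClass G s(Sum.inl u, Sum.inl v) = some (s(u, v), 0) := rfl

@[simp] lemma abClass_inl_pend (u : V) (p : G.edgeSet × Fin 2) :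
    abClass G s(Sum.inl u, Sum.inr (Sum.inl p)) = some ((p.1 : Sym2 V), p.2) := rfl

@[simp] lemma abClass_inl_xv (u : V) :
    abClass G s(Sum.inl u, xv G) = none := rfl

end Ext

end ECG

/-- For `H` obtained from `G` by adding two simplicial vertices at every
edge and one universal vertex over the original vertices, `α'(H) = 2m + α(G)`,
where `m` is the number of edges of `G`. -/
theorem alpha'_extGraph {V : Type*} [Fintype V] (G : SimpleGraph V) :
    ECG.indepNum (ECG.edgeCliqueGraph (ECG.extGraph G)) =
      2 * G.edgeSet.ncard + ECG.indepNum G := by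
  classical
  obtain ⟨S₀, hS₀, hS₀card⟩ := ECG.exists_indep_card G
  have hfin : G.edgeSet.Finite := Set.toFinite _
  haveI instE : Fintype ↥G.edgeSet := hfin.fintype
  have hcardE : Fintype.card ↥G.edgeSet = G.edgeSet.ncard := by
    rw [Set.ncard_eq_toFinset_card', Set.toFinset_card]
  refine le_antisymm (ECG.indepNum_le _ _ ?_) ?_
  · -- upper bound
    intro T hT
    have hsplit : (T.filter (fun t : (ECG.extGraph G).edgeSet => ECG.xv G ∈ (t : Sym2 _))).card +
        (T.filter (fun t : (ECG.extGraph G).edgeSet => ¬ ECG.xv G ∈ (t : Sym2 _))).card = T.card :=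
      Finset.card_filter_add_card_filter_not _
    -- every edge not at the universal vertex is an original edge or a pendant edge
    have hmem : ∀ t ∈ T.filter (fun t : (ECG.extGraph G).edgeSet => ¬ ECG.xv G ∈ (t : Sym2 _)),
        (∃ u v, G.Adj u v ∧ (t : Sym2 (V ⊕ (G.edgeSet × Fin 2) ⊕ Unit)) = s(Sum.inl u, Sum.inl v)) ∨
        (∃ (u : V) (p : G.edgeSet × Fin 2), u ∈ (p.1 : Sym2 V) ∧
          (t : Sym2 (V ⊕ (G.edgeSet × Fin 2) ⊕ Unit)) = s(Sum.inl u, Sum.inr (Sum.inl p))) := by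
      intro t ht
      obtain ⟨-, htP⟩ := Finset.mem_filter.mp ht
      rcases ECG.edge_cases t with h | h | ⟨u, hval⟩
      · exact Or.inl h
      · exact Or.inr h
      · exact absurd (by rw [hval]; exact Sym2.mem_mk_right _ _) htP
    have hTmem : ∀ {t : (ECG.extGraph G).edgeSet} {p : (ECG.extGraph G).edgeSet → Prop}
        [DecidablePred p], t ∈ T.filter p → t ∈ (↑T : Set _) := by
      intro t p _ ht
      exact Finset.mem_coe.mpr (Finset.mem_filter.mp ht).1
    have h1 : (T.filter (fun t : (ECG.extGraph G).edgeSet => ¬ ECG.xv G ∈ (t : Sym2 _))).card ≤ 2 * G.edgeSet.ncard := by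
      have hcard := Finset.card_le_card_of_injOn
        (s := T.filter (fun t : (ECG.extGraph G).edgeSet => ¬ ECG.xv G ∈ (t : Sym2 _)))
        (f := fun t : (ECG.extGraph G).edgeSet => ECG.abClass G (t : Sym2 _))
        (t := (hfin.toFinset ×ˢ (Finset.univ : Finset (Fin 2))).image some)
        ?_ ?_
      · have htc : ((hfin.toFinset ×ˢ (Finset.univ : Finset (Fin 2))).image some).card =
            2 * G.edgeSet.ncard := by
          rw [Finset.card_image_of_injective _ (Option.some_injective _),
            Finset.card_product, Finset.card_univ, Fintype.card_fin,
            Set.ncard_eq_toFinset_card _ hfin]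
          ring
        exact htc ▸ hcard
      · -- maps into
        intro t ht
        rcases hmem t ht with ⟨u, v, hadj, hval⟩ | ⟨u, p, -, hval⟩ <;> dsimp only
        · rw [hval, ECG.abClass_inl_inl]
          exact Finset.mem_image.mpr ⟨(s(u, v), 0), Finset.mem_product.mpr
            ⟨hfin.mem_toFinset.mpr (G.mem_edgeSet.mpr hadj), Finset.mem_univ _⟩, rfl⟩
        · rw [hval, ECG.abClass_inl_pend]
          exact Finset.mem_image.mpr ⟨((p.1 : Sym2 V), p.2), Finset.mem_product.mpr
            ⟨hfin.mem_toFinset.mpr p.1.2, Finset.mem_univ _⟩, rfl⟩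
      · -- injective on the filtered set
        intro t₁ h₁ t₂ h₂ habs
        dsimp only at habs
        have h₁' := Finset.mem_coe.mp h₁
        have h₂' := Finset.mem_coe.mp h₂
        rcases hmem t₁ h₁' with ⟨u, v, hadj, hval1⟩ | ⟨w, p, hwp, hval1⟩ <;>
          rcases hmem t₂ h₂' with ⟨u', v', hadj', hval2⟩ | ⟨w', q, hwq, hval2⟩
        · -- both original edges
          rw [hval1, hval2, ECG.abClass_inl_inl, ECG.abClass_inl_inl] at habs
          simp only [Option.some.injEq, Prod.mk.injEq] at habs
          apply Subtype.ext
          rw [hval1, hval2]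
          rcases Sym2.eq_iff.mp habs.1 with ⟨rfl, rfl⟩ | ⟨rfl, rfl⟩
          · rfl
          · exact Sym2.eq_swap
        · -- original edge vs pendant edge : contradiction
          exfalso
          rw [hval1, hval2, ECG.abClass_inl_inl, ECG.abClass_inl_pend] at habs
          simp only [Option.some.injEq, Prod.mk.injEq] at habs
          have hE : (q.1 : Sym2 V) = s(u, v) := habs.1.symm
          have hne : t₁ ≠ t₂ := by
            intro h
            have hcontra := hval1.symm.trans ((congrArg Subtype.val h).trans hval2)
            simp [Sym2.eq_iff] at hcontra
          have hKadj : (ECG.edgeCliqueGraph (ECG.extGraph G)).Adj t₁ t₂ := by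
            refine ECG.cliqueAdj hne ?_
            intro x hx y hy hxy
            rw [hval1] at hx; rw [hval2] at hy
            simp only [Sym2.mem_iff] at hx hy
            rcases hy with rfl | rfl
            · have hw' : w' = u ∨ w' = v := by
                rw [hE] at hwq; exact Sym2.mem_iff.mp hwq
              rcases hx with rfl | rfl
              · rcases hw' with rfl | rfl
                · exact absurd rfl hxy
                · exact hadj
              · rcases hw' with rfl | rfl
                · exact hadj.symm
                · exact absurd rfl hxy
            · rcases hx with rfl | rfl
              · show u ∈ (q.1 : Sym2 V); rw [hE]; exact Sym2.mem_mk_left _ _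
              · show v ∈ (q.1 : Sym2 V); rw [hE]; exact Sym2.mem_mk_right _ _
          exact hT (hTmem h₁') (hTmem h₂') hne hKadj
        · -- pendant edge vs original edge : contradiction
          exfalso
          rw [hval1, hval2, ECG.abClass_inl_pend, ECG.abClass_inl_inl] at habs
          simp only [Option.some.injEq, Prod.mk.injEq] at habs
          have hE : (p.1 : Sym2 V) = s(u', v') := habs.1
          have hne : t₂ ≠ t₁ := by
            intro h
            have hcontra := hval2.symm.trans ((congrArg Subtype.val h).trans hval1)
            simp [Sym2.eq_iff] at hcontra
          have hKadj : (ECG.edgeCliqueGraph (ECG.extGraph G)).Adj t₂ t₁ := by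
            refine ECG.cliqueAdj hne ?_
            intro x hx y hy hxy
            rw [hval2] at hx; rw [hval1] at hy
            simp only [Sym2.mem_iff] at hx hy
            rcases hy with rfl | rfl
            · have hw' : w = u' ∨ w = v' := by
                rw [hE] at hwp; exact Sym2.mem_iff.mp hwp
              rcases hx with rfl | rfl
              · rcases hw' with rfl | rfl
                · exact absurd rfl hxy
                · exact hadj'
              · rcases hw' with rfl | rfl
                · exact hadj'.symm
                · exact absurd rfl hxy
            · rcases hx with rfl | rfl
              · show u' ∈ (p.1 : Sym2 V); rw [hE]; exact Sym2.mem_mk_left _ _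
              · show v' ∈ (p.1 : Sym2 V); rw [hE]; exact Sym2.mem_mk_right _ _
          exact absurd hKadj (hT (hTmem h₂') (hTmem h₁') hne)
        · -- both pendant edges
          rw [hval1, hval2, ECG.abClass_inl_pend, ECG.abClass_inl_pend] at habs
          simp only [Option.some.injEq, Prod.mk.injEq] at habs
          have hpq : p = q := Prod.ext (Subtype.ext habs.1) habs.2
          subst hpq
          by_cases hww : w = w'
          · subst hww
            exact Subtype.ext (hval1.trans hval2.symm)
          · exfalso
            have hne : t₁ ≠ t₂ := by
              intro h
              have hcontra := hval1.symm.trans ((congrArg Subtype.val h).trans hval2)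
              simp [Sym2.eq_iff, hww] at hcontra
            have hKadj : (ECG.edgeCliqueGraph (ECG.extGraph G)).Adj t₁ t₂ := by
              refine ECG.cliqueAdj hne ?_
              intro x hx y hy hxy
              rw [hval1] at hx; rw [hval2] at hy
              simp only [Sym2.mem_iff] at hx hy
              rcases hx with rfl | rfl <;> rcases hy with rfl | rfl
              · exact ECG.adj_of_mem_edge (e := p.1) hwp hwq hww
              · exact hwp
              · exact hwq
              · exact absurd rfl hxy
            exact hT (hTmem h₁') (hTmem h₂') hne hKadj
    have h2 : (T.filter (fun t : (ECG.extGraph G).edgeSet => ECG.xv G ∈ (t : Sym2 _))).card ≤ ECG.indepNum G := by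
      set S : Finset V := Finset.univ.filter (fun v => ECG.xedge (G := G) v ∈ T) with hS
      have himg : T.filter (fun t : (ECG.extGraph G).edgeSet => ECG.xv G ∈ (t : Sym2 _)) = S.image ECG.xedge := by
        ext t
        simp only [Finset.mem_filter, Finset.mem_image, Finset.mem_univ, true_and, hS]
        constructor
        · rintro ⟨htT, htP⟩
          rcases ECG.edge_cases t with ⟨u, v, -, hval⟩ | ⟨u, p, -, hval⟩ | ⟨u, hval⟩
          · exfalso; rw [hval] at htP; simp [ECG.xv, Sym2.mem_iff] at htP
          · exfalso; rw [hval] at htP; simp [ECG.xv, Sym2.mem_iff] at htP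
          · have ht' : t = ECG.xedge u := Subtype.ext hval
            exact ⟨u, by rw [← ht']; exact htT, ht'.symm⟩
        · rintro ⟨v, hv, rfl⟩
          exact ⟨hv, Sym2.mem_mk_right _ _⟩
      have hSind : ECG.IsIndepSet G ↑S := by
        intro v hv w hw hvw hadj
        have hv' : ECG.xedge (G := G) v ∈ T :=
          (Finset.mem_filter.mp (Finset.mem_coe.mp hv)).2
        have hw' : ECG.xedge (G := G) w ∈ T :=
          (Finset.mem_filter.mp (Finset.mem_coe.mp hw)).2
        have hne : ECG.xedge (G := G) v ≠ ECG.xedge w := fun h => hvw (ECG.xedge_inj h)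
        have hKadj : (ECG.edgeCliqueGraph (ECG.extGraph G)).Adj (ECG.xedge v) (ECG.xedge w) := by
          refine ECG.cliqueAdj hne ?_
          intro x hx y hy hxy
          simp only [ECG.xedge, Sym2.mem_iff] at hx hy
          rcases hx with rfl | rfl <;> rcases hy with rfl | rfl
          · exact hadj
          · trivial
          · trivial
          · exact absurd rfl hxy
        exact hT (Finset.mem_coe.mpr hv') (Finset.mem_coe.mpr hw') hne hKadj
      calc (T.filter (fun t : (ECG.extGraph G).edgeSet => ECG.xv G ∈ (t : Sym2 _))).card = S.card := by
            rw [himg, Finset.card_image_of_injective _ ECG.xedge_inj]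
        _ ≤ _ := ECG.le_indepNum G S hSind
    omega
  · -- lower bound
    set T : Finset ((ECG.extGraph G).edgeSet) :=
      (Finset.univ : Finset (G.edgeSet × Fin 2)).image ECG.pend ∪ S₀.image ECG.xedge with hT
    have hdisj : Disjoint ((Finset.univ : Finset (G.edgeSet × Fin 2)).image ECG.pend)
        (S₀.image ECG.xedge) := by
      rw [Finset.disjoint_left]
      rintro t ht1 ht2
      obtain ⟨p, -, hp⟩ := Finset.mem_image.mp ht1
      obtain ⟨v, -, hv⟩ := Finset.mem_image.mp ht2
      have : ECG.pend p = ECG.xedge v := hp.trans hv.symm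
      have h' := Subtype.ext_iff.mp this
      simp [ECG.pend, ECG.xedge, ECG.xv, Sym2.eq_iff] at h'
    have hcardT : T.card = 2 * G.edgeSet.ncard + ECG.indepNum G := by
      rw [hT, Finset.card_union_of_disjoint hdisj,
        Finset.card_image_of_injective _ ECG.pend_inj,
        Finset.card_image_of_injective _ ECG.xedge_inj,
        Finset.card_univ, Fintype.card_prod, Fintype.card_fin, hcardE, hS₀card]
      ring
    have hindep : ECG.IsIndepSet (ECG.edgeCliqueGraph (ECG.extGraph G)) ↑T := by
      intro a ha b hb hne
      rw [Finset.mem_coe, hT, Finset.mem_union] at ha hb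
      have hform : ∀ c ∈ T, (∃ p : G.edgeSet × Fin 2, c = ECG.pend p) ∨
          (∃ v, v ∈ S₀ ∧ c = ECG.xedge v) := by
        intro c hc
        rw [hT, Finset.mem_union] at hc
        rcases hc with hc | hc
        · obtain ⟨p, -, hp⟩ := Finset.mem_image.mp hc
          exact Or.inl ⟨p, hp.symm⟩
        · obtain ⟨v, hv, hv'⟩ := Finset.mem_image.mp hc
          exact Or.inr ⟨v, hv, hv'.symm⟩
      have ha' := hform a (by rw [hT, Finset.mem_union]; exact ha)
      have hb' := hform b (by rw [hT, Finset.mem_union]; exact hb)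
      rcases ha' with ⟨p, rfl⟩ | ⟨v, hv, rfl⟩ <;> rcases hb' with ⟨q, rfl⟩ | ⟨w, hw, rfl⟩
      · -- pend p vs pend q
        have hpq : p ≠ q := fun h => hne (by rw [h])
        refine ECG.not_cliqueAdj (x := Sum.inr (Sum.inl p)) (y := Sum.inr (Sum.inl q))
          ?_ ?_ ?_ ?_
        · exact Sym2.mem_mk_right _ _
        · exact Sym2.mem_mk_right _ _
        · simp [hpq]
        · exact fun h => h
      · -- pend p vs xedge w
        refine ECG.not_cliqueAdj (x := Sum.inr (Sum.inl p)) (y := ECG.xv G) ?_ ?_ ?_ ?_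
        · exact Sym2.mem_mk_right _ _
        · exact Sym2.mem_mk_right _ _
        · simp [ECG.xv]
        · exact fun h => h
      · -- xedge v vs pend q
        refine ECG.not_cliqueAdj (x := ECG.xv G) (y := Sum.inr (Sum.inl q)) ?_ ?_ ?_ ?_
        · exact Sym2.mem_mk_right _ _
        · exact Sym2.mem_mk_right _ _
        · simp [ECG.xv]
        · exact fun h => h
      · -- xedge v vs xedge w
        have hvw : v ≠ w := fun h => hne (by rw [h])
        refine ECG.not_cliqueAdj (x := Sum.inl v) (y := Sum.inl w) ?_ ?_ ?_ ?_
        · exact Sym2.mem_mk_left _ _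
        · exact Sym2.mem_mk_left _ _
        · simp [hvw]
        · exact hS₀ hv hw hvw
    calc 2 * G.edgeSet.ncard + ECG.indepNum G = T.card := hcardT.symm
      _ ≤ _ := ECG.le_indepNum _ T hindep
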